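/- Let B = {a₁, ..., a₈} be affinely independent in (Z/2Z)^n and let x₁ = a₁+a₂+a₃+a₄+a₅, x₂ = a₁+a₂+a₃+a₇+a₈, x₃ = a₃+a₄+a₅+a₆+a₇, x₄ = a₂+a₃+a₄+a₆+a₈. Then C = B ∪ {x₁, x₂, x₃, x₄} is a cap of size 12. -/

import Mathlib

/-- A cap: a subset of (Z/2Z)^n containing no quad (four distinct vectors summing to zero). -/
def IsCap {n : ℕ} (C : Set (Fin n → ZMod 2)) : Prop :=
  ∀ a ∈ C, ∀ b ∈ C, ∀ c ∈ C, ∀ d ∈ C,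
    a ≠ b → a ≠ c → a ≠ d → b ≠ c → b ≠ d → c ≠ d → a + b + c + d ≠ 0

/-- Affine independence: no element is the sum of an odd number of other elements. -/
def AffIndep {n : ℕ} (B : Finset (Fin n → ZMod 2)) : Prop :=
  ∀ b ∈ B, ∀ T ⊆ B.erase b, Odd T.card → b ≠ ∑ v ∈ T, v

namespace Cap12Aux

/-- Bitmasks of the 12 index sets: singletons {0},...,{7}, then
{0,1,2,3,4}, {0,1,2,6,7}, {2,3,4,5,6}, {1,2,3,5,7}. -/
def m : Fin 12 → ℕ := ![1, 2, 4, 8, 16, 32, 64, 128, 31, 199, 124, 174]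

/-- The 12 index sets as finsets. -/
def g : Fin 12 → Finset (Fin 8) := fun i => Finset.univ.filter fun t => (m i).testBit t.val

lemma mem_g {i : Fin 12} {t : Fin 8} : t ∈ g i ↔ (m i).testBit t.val := by
  simp [g]

lemma m_lt : ∀ i : Fin 12, m i < 256 := by decide

lemma g_odd : ∀ i : Fin 12, Odd (g i).card := by decide

set_option maxHeartbeats 1000000 in
lemma quadN : ∀ i j k l : Fin 12, i ≠ j → i ≠ k → i ≠ l → j ≠ k → j ≠ l → k ≠ l →
    (((m i ^^^ m j) ^^^ m k) ^^^ m l) ≠ 0 := by decide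

lemma pairN : ∀ i j : Fin 12, i ≠ j → m i ^^^ m j ≠ 0 := by decide

lemma mem_symmDiff_testBit {S T : Finset (Fin 8)} {x y : ℕ}
    (hS : ∀ t : Fin 8, t ∈ S ↔ x.testBit t.val) (hT : ∀ t : Fin 8, t ∈ T ↔ y.testBit t.val) :
    ∀ t : Fin 8, t ∈ symmDiff S T ↔ (x ^^^ y).testBit t.val := by
  intro t
  rw [Finset.mem_symmDiff, Nat.testBit_xor, hS, hT]
  cases x.testBit t.val <;> cases y.testBit t.val <;> simp

lemma exists_bit {x : ℕ} (hx : x ≠ 0) (hlt : x < 256) : ∃ t : Fin 8, x.testBit t.val := by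
  obtain ⟨b, hb⟩ := Nat.exists_testBit_of_ne_zero hx
  have hb8 : b < 8 := by
    by_contra h
    have h2 : x < 2 ^ b := lt_of_lt_of_le hlt (by
      calc (256 : ℕ) = 2 ^ 8 := by norm_num
        _ ≤ 2 ^ b := Nat.pow_le_pow_right (by norm_num) (by omega))
    rw [Nat.testBit_lt_two_pow h2] at hb
    exact Bool.false_ne_true hb
  exact ⟨⟨b, hb8⟩, hb⟩

lemma xor_lt {x y : ℕ} (hx : x < 256) (hy : y < 256) : x ^^^ y < 256 := by
  have : x ^^^ y < 2 ^ 8 := Nat.xor_lt_two_pow (by norm_num at hx ⊢; exact hx) (by norm_num at hy ⊢; exact hy)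
  norm_num at this; exact this

lemma mem_g_symm2 (i j : Fin 12) :
    ∀ t : Fin 8, t ∈ symmDiff (g i) (g j) ↔ (m i ^^^ m j).testBit t.val :=
  mem_symmDiff_testBit (fun _ => mem_g) (fun _ => mem_g)

lemma mem_g_symm4 (i j k l : Fin 12) :
    ∀ t : Fin 8, t ∈ symmDiff (symmDiff (symmDiff (g i) (g j)) (g k)) (g l) ↔
      ((((m i ^^^ m j) ^^^ m k) ^^^ m l)).testBit t.val :=
  mem_symmDiff_testBit (mem_symmDiff_testBit (mem_g_symm2 i j) (fun _ => mem_g)) (fun _ => mem_g)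

lemma pair_nonempty {i j : Fin 12} (hij : i ≠ j) : (symmDiff (g i) (g j)).Nonempty := by
  obtain ⟨t, ht⟩ := exists_bit (pairN i j hij) (xor_lt (m_lt i) (m_lt j))
  exact ⟨t, (mem_g_symm2 i j t).2 ht⟩

lemma quad_nonempty {i j k l : Fin 12} (hij : i ≠ j) (hik : i ≠ k) (hil : i ≠ l)
    (hjk : j ≠ k) (hjl : j ≠ l) (hkl : k ≠ l) :
    (symmDiff (symmDiff (symmDiff (g i) (g j)) (g k)) (g l)).Nonempty := by
  obtain ⟨t, ht⟩ := exists_bit (quadN i j k l hij hik hil hjk hjl hkl)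
    (xor_lt (xor_lt (xor_lt (m_lt i) (m_lt j)) (m_lt k)) (m_lt l))
  exact ⟨t, (mem_g_symm4 i j k l t).2 ht⟩

lemma card_symmDiff_mod (S T : Finset (Fin 8)) :
    (symmDiff S T).card % 2 = (S.card + T.card) % 2 := by
  have h1 : symmDiff S T = (S ∪ T) \ (S ∩ T) := by
    rw [symmDiff_eq_sup_sdiff_inf, Finset.sup_eq_union, Finset.inf_eq_inter]
  have h2 : (S ∩ T) ⊆ (S ∪ T) := Finset.inter_subset_left.trans Finset.subset_union_left
  have h3 := Finset.card_union_add_card_inter S T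
  have h4 : (S ∩ T).card ≤ (S ∪ T).card := Finset.card_le_card h2
  rw [h1, Finset.card_sdiff_of_subset h2]
  omega

lemma pair_even (i j : Fin 12) : Even (symmDiff (g i) (g j)).card := by
  have h1 := card_symmDiff_mod (g i) (g j)
  have h2 := Nat.odd_iff.1 (g_odd i)
  have h3 := Nat.odd_iff.1 (g_odd j)
  rw [Nat.even_iff]; omega

lemma quad_even (i j k l : Fin 12) :
    Even (symmDiff (symmDiff (symmDiff (g i) (g j)) (g k)) (g l)).card := by
  have h1 := card_symmDiff_mod (g i) (g j)
  have h2 := card_symmDiff_mod (symmDiff (g i) (g j)) (g k)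
  have h3 := card_symmDiff_mod (symmDiff (symmDiff (g i) (g j)) (g k)) (g l)
  have o1 := Nat.odd_iff.1 (g_odd i)
  have o2 := Nat.odd_iff.1 (g_odd j)
  have o3 := Nat.odd_iff.1 (g_odd k)
  have o4 := Nat.odd_iff.1 (g_odd l)
  rw [Nat.even_iff]; omega

variable {n : ℕ} (a : Fin 8 → (Fin n → ZMod 2))

lemma addself (v : Fin n → ZMod 2) : v + v = 0 := by
  funext k
  exact CharTwo.add_self_eq_zero (v k)

lemma sum_symmDiff (S T : Finset (Fin 8)) :
    ((∑ j ∈ S, a j) + ∑ j ∈ T, a j) = ∑ j ∈ symmDiff S T, a j := by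
  have h1 : (S ∪ T) = symmDiff S T ∪ (S ∩ T) := (symmDiff_sup_inf S T).symm
  have hd : Disjoint (symmDiff S T) (S ∩ T) := disjoint_symmDiff_inf S T
  have h2 : (∑ j ∈ S ∪ T, a j) + ∑ j ∈ S ∩ T, a j = (∑ j ∈ S, a j) + ∑ j ∈ T, a j :=
    Finset.sum_union_inter
  rw [← h2, h1, Finset.sum_union hd, add_assoc, addself, add_zero]

lemma key (ha : Function.Injective a) (hB : AffIndep (Finset.image a Finset.univ)) :
    ∀ S : Finset (Fin 8), S.Nonempty → Even S.card → ∑ j ∈ S, a j ≠ 0 := by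
  rintro S ⟨b, hb⟩ heven h0
  have hsub : Finset.image a (S.erase b) ⊆ (Finset.image a Finset.univ).erase (a b) := by
    intro v hv
    simp only [Finset.mem_image] at hv
    obtain ⟨j, hj, rfl⟩ := hv
    rw [Finset.mem_erase]
    exact ⟨fun h => (Finset.mem_erase.1 hj).1 (ha h),
      Finset.mem_image_of_mem a (Finset.mem_univ j)⟩
  have hodd : Odd (Finset.image a (S.erase b)).card := by
    rw [Finset.card_image_of_injective _ ha, Finset.card_erase_of_mem hb, Nat.odd_iff]
    have h1 : 1 ≤ S.card := Finset.card_pos.2 ⟨b, hb⟩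
    have h2 := Nat.even_iff.1 heven
    omega
  have hne := hB (a b) (Finset.mem_image_of_mem a (Finset.mem_univ b)) _ hsub hodd
  apply hne
  rw [Finset.sum_image (fun x _ y _ h => ha h)]
  have h1 : a b + ∑ j ∈ S.erase b, a j = 0 := by
    rw [Finset.add_sum_erase _ _ hb]; exact h0
  calc a b = a b + (a b + ∑ j ∈ S.erase b, a j) := by rw [h1, add_zero]
    _ = ∑ j ∈ S.erase b, a j := by rw [← add_assoc, addself, zero_add]

/-- The twelve elements of the cap. -/
def f (i : Fin 12) : Fin n → ZMod 2 := ∑ j ∈ g i, a j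

lemma f_inj (ha : Function.Injective a) (hB : AffIndep (Finset.image a Finset.univ)) :
    Function.Injective (f a) := by
  intro i j h
  by_contra hij
  apply key a ha hB _ (pair_nonempty hij) (pair_even i j)
  rw [← sum_symmDiff]
  show f a i + f a j = 0
  rw [h]
  exact addself _

lemma f_single : ∀ i : Fin 8, f a (Fin.castLE (by norm_num) i) = a i := by
  have hg : ∀ i : Fin 8, g (Fin.castLE (by norm_num) i) = {i} := by decide
  intro i
  rw [f, hg i, Finset.sum_singleton]

lemma f8 : f a 8 = a 0 + a 1 + a 2 + a 3 + a 4 := by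
  rw [f, show g 8 = ({0, 1, 2, 3, 4} : Finset (Fin 8)) from by decide]
  rw [Finset.sum_insert (by decide), Finset.sum_insert (by decide),
    Finset.sum_insert (by decide), Finset.sum_insert (by decide), Finset.sum_singleton]
  ring

lemma f9 : f a 9 = a 0 + a 1 + a 2 + a 6 + a 7 := by
  rw [f, show g 9 = ({0, 1, 2, 6, 7} : Finset (Fin 8)) from by decide]
  rw [Finset.sum_insert (by decide), Finset.sum_insert (by decide),
    Finset.sum_insert (by decide), Finset.sum_insert (by decide), Finset.sum_singleton]
  ring

lemma f10 : f a 10 = a 2 + a 3 + a 4 + a 5 + a 6 := by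
  rw [f, show g 10 = ({2, 3, 4, 5, 6} : Finset (Fin 8)) from by decide]
  rw [Finset.sum_insert (by decide), Finset.sum_insert (by decide),
    Finset.sum_insert (by decide), Finset.sum_insert (by decide), Finset.sum_singleton]
  ring

lemma f11 : f a 11 = a 1 + a 2 + a 3 + a 5 + a 7 := by
  rw [f, show g 11 = ({1, 2, 3, 5, 7} : Finset (Fin 8)) from by decide]
  rw [Finset.sum_insert (by decide), Finset.sum_insert (by decide),
    Finset.sum_insert (by decide), Finset.sum_insert (by decide), Finset.sum_singleton]
  ring

lemma union_eq :
    (Finset.image a Finset.univ ∪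
        {a 0 + a 1 + a 2 + a 3 + a 4,
         a 0 + a 1 + a 2 + a 6 + a 7,
         a 2 + a 3 + a 4 + a 5 + a 6,
         a 1 + a 2 + a 3 + a 5 + a 7}) = Finset.image (f a) Finset.univ := by
  apply Finset.ext
  intro v
  simp only [Finset.mem_union, Finset.mem_image, Finset.mem_insert, Finset.mem_singleton,
    Finset.mem_univ, true_and]
  constructor
  · rintro (⟨i, rfl⟩ | rfl | rfl | rfl | rfl)
    · exact ⟨Fin.castLE (by norm_num) i, f_single a i⟩
    · exact ⟨8, f8 a⟩
    · exact ⟨9, f9 a⟩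
    · exact ⟨10, f10 a⟩
    · exact ⟨11, f11 a⟩
  · rintro ⟨i, rfl⟩
    fin_cases i
    · exact Or.inl ⟨0, (f_single a 0).symm⟩
    · exact Or.inl ⟨1, (f_single a 1).symm⟩
    · exact Or.inl ⟨2, (f_single a 2).symm⟩
    · exact Or.inl ⟨3, (f_single a 3).symm⟩
    · exact Or.inl ⟨4, (f_single a 4).symm⟩
    · exact Or.inl ⟨5, (f_single a 5).symm⟩
    · exact Or.inl ⟨6, (f_single a 6).symm⟩
    · exact Or.inl ⟨7, (f_single a 7).symm⟩
    · exact Or.inr (Or.inl (f8 a))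
    · exact Or.inr (Or.inr (Or.inl (f9 a)))
    · exact Or.inr (Or.inr (Or.inr (Or.inl (f10 a))))
    · exact Or.inr (Or.inr (Or.inr (Or.inr (f11 a))))

end Cap12Aux

open Cap12Aux in
theorem cap12_233333 {n : ℕ} (a : Fin 8 → (Fin n → ZMod 2))
    (ha : Function.Injective a)
    (hB : AffIndep (Finset.image a Finset.univ)) :
    IsCap (↑(Finset.image a Finset.univ ∪
        {a 0 + a 1 + a 2 + a 3 + a 4,
         a 0 + a 1 + a 2 + a 6 + a 7,
         a 2 + a 3 + a 4 + a 5 + a 6,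
         a 1 + a 2 + a 3 + a 5 + a 7}) : Set (Fin n → ZMod 2)) ∧
    (Finset.image a Finset.univ ∪
        {a 0 + a 1 + a 2 + a 3 + a 4,
         a 0 + a 1 + a 2 + a 6 + a 7,
         a 2 + a 3 + a 4 + a 5 + a 6,
         a 1 + a 2 + a 3 + a 5 + a 7}).card = 12 := by
  have hU := union_eq a
  constructor
  · rw [hU]
    intro w hw x hx y hy z hz hwx hwy hwz hxy hxz hyz
    simp only [Finset.coe_image, Finset.coe_univ, Set.image_univ, Set.mem_range] at hw hx hy hz
    obtain ⟨i, rfl⟩ := hw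
    obtain ⟨j, rfl⟩ := hx
    obtain ⟨k, rfl⟩ := hy
    obtain ⟨l, rfl⟩ := hz
    have hij : i ≠ j := fun h => hwx (by rw [h])
    have hik : i ≠ k := fun h => hwy (by rw [h])
    have hil : i ≠ l := fun h => hwz (by rw [h])
    have hjk : j ≠ k := fun h => hxy (by rw [h])
    have hjl : j ≠ l := fun h => hxz (by rw [h])
    have hkl : k ≠ l := fun h => hyz (by rw [h])
    have hsum : f a i + f a j + f a k + f a l =
        ∑ t ∈ symmDiff (symmDiff (symmDiff (g i) (g j)) (g k)) (g l), a t := by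
      rw [show f a i + f a j + f a k + f a l = ((f a i + f a j) + f a k) + f a l by ring]
      rw [show f a i + f a j = ∑ t ∈ symmDiff (g i) (g j), a t from sum_symmDiff a _ _]
      rw [show (∑ t ∈ symmDiff (g i) (g j), a t) + f a k =
        ∑ t ∈ symmDiff (symmDiff (g i) (g j)) (g k), a t from sum_symmDiff a _ _]
      exact sum_symmDiff a _ _
    rw [hsum]
    exact key a ha hB _ (quad_nonempty hij hik hil hjk hjl hkl) (quad_even i j k l)
  · rw [hU, Finset.card_image_of_injective _ (f_inj a ha hB), Finset.card_univ,
      Fintype.card_fin]
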